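/- Assume the dual graph Γ of A is a tree (connected and without cycles) and that C(A)_i ≤ 0 for every vertex i. Then C(A)_i < 0 for every leaf i of Γ if and only if A satisfies (NN). -/

import Mathlib

/-- `A` is negative definite: `xᵀAx < 0` for every nonzero real vector `x`. -/
def NegDefQ {V : Type*} [Fintype V] (A : Matrix V V ℚ) : Prop :=
  ∀ x : V → ℝ, x ≠ 0 → ∑ i, ∑ j, x i * (A i j : ℝ) * x j < 0

/-- Numerical Nash condition `NN_(i,j)`: for every rational vector `C` with nonpositive
entries there is an integer vector `X` with positive entries such that `(AX)_k ≤ C_k`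
for all `k` and `X i < X j`. -/
def NashNN {V : Type*} [Fintype V] (A : Matrix V V ℚ) (i j : V) : Prop :=
  ∀ C : V → ℚ, (∀ k, C k ≤ 0) →
    ∃ X : V → ℤ, (∀ k, 0 < X k) ∧ (∀ k, ∑ t, A k t * (X t : ℚ) ≤ C k) ∧ X i < X j

/-- Condition `(NN)`: `NN_(i,j)` for every ordered pair of distinct indices. -/
def NashNNAll {V : Type*} [Fintype V] (A : Matrix V V ℚ) : Prop :=
  ∀ i j : V, i ≠ j → NashNN A i j

/-- The dual graph of `A`: edge between distinct `i, j` iff `A i j > 0`. -/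
def dualGraph {V : Type*} (A : Matrix V V ℚ) : SimpleGraph V :=
  SimpleGraph.fromRel fun i j => 0 < A i j

/-- A leaf of a graph: a vertex adjacent to exactly one other vertex. -/
def IsLeaf {V : Type*} (G : SimpleGraph V) (i : V) : Prop :=
  ∃! j, G.Adj i j

open SimpleGraph

variable {n : ℕ}

lemma dual_adj (A : Matrix (Fin n) (Fin n) ℚ) (hsym : ∀ i j, A i j = A j i) {i j : Fin n} :
    (dualGraph A).Adj i j ↔ i ≠ j ∧ 0 < A i j := by
  constructor
  · rintro ⟨hne, h | h⟩
    · exact ⟨hne, h⟩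
    · exact ⟨hne, (hsym i j) ▸ h⟩
  · rintro ⟨hne, h⟩
    exact ⟨hne, Or.inl h⟩

lemma qf_neg (A : Matrix (Fin n) (Fin n) ℚ) (hneg : NegDefQ A) (v : Fin n → ℚ) (hv : v ≠ 0) :
    ∑ i, ∑ j, v i * A i j * v j < 0 := by
  have hx : (fun i => (v i : ℝ)) ≠ 0 := by
    intro h
    apply hv
    funext i
    have := congrFun h i
    simpa using this
  have h2 := hneg (fun i => (v i : ℝ)) hx
  have hcast : ((∑ i, ∑ j, v i * A i j * v j : ℚ) : ℝ)
      = ∑ i, ∑ j, (v i : ℝ) * (A i j : ℝ) * (v j : ℝ) := by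
    push_cast
    rfl
  have : ((∑ i, ∑ j, v i * A i j * v j : ℚ) : ℝ) < 0 := by rw [hcast]; exact h2
  exact_mod_cast this

lemma qf_rows (A : Matrix (Fin n) (Fin n) ℚ) (u v : Fin n → ℚ) :
    ∑ i, ∑ j, u i * A i j * v j = ∑ i, u i * ∑ j, A i j * v j := by
  refine Finset.sum_congr rfl fun i _ => ?_
  rw [Finset.mul_sum]
  exact Finset.sum_congr rfl fun j _ => by ring

/-- concat of a path avoiding the new vertex is a path -/
lemma concat_isPath' {V : Type*} {G : SimpleGraph V} {u v w : V} {p : G.Walk u v}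
    (hp : p.IsPath) (h : G.Adj v w) (hw : w ∉ p.support) : (p.concat h).IsPath := by
  rw [← SimpleGraph.Walk.isPath_reverse_iff, SimpleGraph.Walk.reverse_concat]
  exact (SimpleGraph.Walk.isPath_reverse_iff p |>.mpr hp).cons
    (by rwa [SimpleGraph.Walk.support_reverse, List.mem_reverse])

/-- In a tree, adjacent vertices have different distances from any base vertex. -/
lemma adj_dist_ne {V : Type*} [DecidableEq V] {G : SimpleGraph V} (ht : G.IsTree) (j : V)
    {u v : V} (h : G.Adj u v) : G.dist j u ≠ G.dist j v := by
  intro he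
  have hconn := ht.isConnected
  obtain ⟨P, hPpath, hPlen⟩ := hconn.exists_path_of_dist j u
  have hvP : v ∉ P.support := by
    intro hv
    have h1 : G.dist j v ≤ (P.takeUntil v hv).length := dist_le _
    have h2 : G.dist v u ≤ (P.dropUntil v hv).length := dist_le _
    have h3 : (P.takeUntil v hv).length + (P.dropUntil v hv).length = P.length := by
      rw [← SimpleGraph.Walk.length_append, SimpleGraph.Walk.take_spec]
    have h4 : 0 < G.dist v u := hconn.pos_dist_of_ne h.ne'
    omega
  have hQ : (P.concat h).IsPath := concat_isPath' hPpath h hvP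
  obtain ⟨R, hRpath, hRlen⟩ := hconn.exists_path_of_dist j v
  have := (ht.existsUnique_path j v).unique hQ hRpath
  have hlen : (P.concat h).length = R.length := by rw [this]
  rw [SimpleGraph.Walk.length_concat] at hlen
  omega

/-- In a tree, a vertex cannot have two distinct neighbors both closer to `j`. -/
lemma unique_parent {V : Type*} [DecidableEq V] {G : SimpleGraph V} (ht : G.IsTree) (j : V)
    {k l1 l2 : V} (h1 : G.Adj k l1) (h2 : G.Adj k l2)
    (hd1 : G.dist j l1 + 1 = G.dist j k) (hd2 : G.dist j l2 + 1 = G.dist j k) : l1 = l2 := by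
  by_contra hne
  have hconn := ht.isConnected
  obtain ⟨P1, hP1, hl1⟩ := hconn.exists_path_of_dist j l1
  obtain ⟨P2, hP2, hl2⟩ := hconn.exists_path_of_dist j l2
  have hkP : ∀ (x : V) (P : G.Walk j x), P.IsPath → P.length = G.dist j x →
      G.dist j x + 1 = G.dist j k → k ∉ P.support := by
    intro x P hP hlen hdx hk
    have hle : G.dist j k ≤ (P.takeUntil k hk).length := dist_le _
    have : (P.takeUntil k hk).length ≤ P.length := SimpleGraph.Walk.length_takeUntil_le P hk
    omega
  have hk1 : k ∉ P1.support := hkP l1 P1 hP1 hl1 hd1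
  have hk2 : k ∉ P2.support := hkP l2 P2 hP2 hl2 hd2
  have hR1 : (P1.concat h1.symm).IsPath := concat_isPath' hP1 h1.symm hk1
  have hR2 : (P2.concat h2.symm).IsPath := concat_isPath' hP2 h2.symm hk2
  have heq := (ht.existsUnique_path j k).unique hR1 hR2
  have := congrArg (fun (W : G.Walk j k) => W.reverse.support) heq
  simp only [SimpleGraph.Walk.reverse_concat, SimpleGraph.Walk.support_cons] at this
  have h1' : P1.reverse.support = l1 :: P1.reverse.support.tail :=
    SimpleGraph.Walk.support_eq_cons _
  have h2' : P2.reverse.support = l2 :: P2.reverse.support.tail :=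
    SimpleGraph.Walk.support_eq_cons _
  rw [h1', h2'] at this
  simp at this
  exact hne this.1

/-- The solution of `Aw = -e_j` attains its strict maximum at `j`. -/
lemma max_at_j (A : Matrix (Fin n) (Fin n) ℚ) (hsym : ∀ i j, A i j = A j i)
    (hoff : ∀ i j, i ≠ j → 0 ≤ A i j) (hneg : NegDefQ A)
    (htree : (dualGraph A).IsTree)
    (hC : ∀ i, ∑ t, A i t ≤ 0)
    (hleaf : ∀ i, IsLeaf (dualGraph A) i → ∑ t, A i t < 0)
    (j : Fin n) (w : Fin n → ℚ)
    (hw : ∀ k, ∑ t, A k t * w t = if k = j then -1 else 0)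
    (hw0 : ∀ k, 0 ≤ w k) : ∀ i, i ≠ j → w i < w j := by
  have hwne : w ≠ 0 := by
    intro h
    have := hw j
    simp [h] at this
  have hwj : 0 < w j := by
    have hq := qf_neg A hneg w hwne
    rw [qf_rows] at hq
    simp only [hw, mul_ite] at hq
    simp at hq
    exact hq
  intro i hij
  by_contra hge
  push_neg at hge
  -- the maximum M
  obtain ⟨i1, _, hmax⟩ := Finset.univ.exists_max_image w ⟨j, Finset.mem_univ j⟩
  set M := w i1 with hM
  have hMj : w j ≤ M := hmax j (Finset.mem_univ j)
  have hMpos : 0 < M := lt_of_lt_of_le hwj hMj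
  -- some vertex ≠ j achieving M
  have hk0 : ∃ k, k ≠ j ∧ w k = M := by
    rcases eq_or_ne i1 j with rfl | h
    · exact ⟨i, hij, le_antisymm (hmax i (Finset.mem_univ i)) hge⟩
    · exact ⟨i1, h, rfl⟩
  -- propagation step
  have step : ∀ k, k ≠ j → w k = M →
      (∑ t, A k t) = 0 ∧ ∀ l, l ≠ k → 0 < A k l → w l = M := by
    intro k hkj hkM
    have hrow : ∑ t, A k t * w t = 0 := by rw [hw]; simp [hkj]
    have hsplit : A k k * w k + ∑ t ∈ Finset.univ.erase k, A k t * w t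
        = ∑ t, A k t * w t := Finset.add_sum_erase Finset.univ (fun t => A k t * w t) (Finset.mem_univ k)
    have hS : ∑ t ∈ Finset.univ.erase k, A k t * (M - w t) = M * ∑ t, A k t := by
      have e1 : ∑ t ∈ Finset.univ.erase k, A k t * (M - w t)
          = (∑ t ∈ Finset.univ.erase k, A k t) * M
            - ∑ t ∈ Finset.univ.erase k, A k t * w t := by
        rw [Finset.sum_mul, ← Finset.sum_sub_distrib]
        exact Finset.sum_congr rfl fun t _ => by ring
      have e2 : A k k + ∑ t ∈ Finset.univ.erase k, A k t = ∑ t, A k t :=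
        Finset.add_sum_erase Finset.univ (fun t => A k t) (Finset.mem_univ k)
      have e3 : ∑ t ∈ Finset.univ.erase k, A k t * w t = -(A k k * M) := by
        rw [← hkM]; linarith [hsplit, hrow]
      rw [e1, e3, ← e2]
      ring
    have hterm_nonneg : ∀ t ∈ Finset.univ.erase k, 0 ≤ A k t * (M - w t) := by
      intro t ht
      have htk : t ≠ k := (Finset.mem_erase.mp ht).1
      exact mul_nonneg (hoff k t (Ne.symm htk)) (by linarith [hmax t (Finset.mem_univ t)])
    have hSle : ∑ t ∈ Finset.univ.erase k, A k t * (M - w t) ≤ 0 := by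
      rw [hS]
      exact mul_nonpos_iff.mpr (Or.inl ⟨le_of_lt hMpos, hC k⟩)
    have hS0 : ∑ t ∈ Finset.univ.erase k, A k t * (M - w t) = 0 :=
      le_antisymm hSle (Finset.sum_nonneg hterm_nonneg)
    constructor
    · have : M * ∑ t, A k t = 0 := by rw [← hS, hS0]
      rcases mul_eq_zero.mp this with h | h
      · exact absurd h (ne_of_gt hMpos)
      · exact h
    · intro l hlk hAkl
      have := (Finset.sum_eq_zero_iff_of_nonneg hterm_nonneg).mp hS0 l
        (Finset.mem_erase.mpr ⟨hlk, Finset.mem_univ l⟩)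
      rcases mul_eq_zero.mp this with h | h
      · exact absurd h (ne_of_gt hAkl)
      · linarith
  -- pick the element of T farthest from j
  set G := dualGraph A with hG
  have hconn := htree.isConnected
  obtain ⟨k0, hk0j, hk0M⟩ := hk0
  set T := Finset.univ.filter (fun k => k ≠ j ∧ w k = M) with hT
  have hTne : T.Nonempty := ⟨k0, by simp [hT, hk0j, hk0M]⟩
  obtain ⟨ks, hksT, hksmax⟩ := T.exists_max_image (fun k => G.dist j k) hTne
  have hksj : ks ≠ j := (Finset.mem_filter.mp hksT).2.1
  have hksM : w ks = M := (Finset.mem_filter.mp hksT).2.2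
  have hd1 : 0 < G.dist j ks := hconn.pos_dist_of_ne (Ne.symm hksj)
  -- every neighbor of ks is strictly closer to j
  have hnb : ∀ l, G.Adj ks l → G.dist j l + 1 = G.dist j ks := by
    intro l hadj
    obtain ⟨hlne, hApos⟩ := (dual_adj A hsym).mp hadj
    have hlM : w l = M := (step ks hksj hksM).2 l (Ne.symm hlne) hApos
    rcases eq_or_ne l j with hlj | hlj
    · rw [hlj] at hadj
      have h1 : G.dist j ks = 1 := dist_eq_one_iff_adj.mpr hadj.symm
      rw [hlj, h1]
      simp
    · have hlT : l ∈ T := Finset.mem_filter.mpr ⟨Finset.mem_univ l, hlj, hlM⟩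
      have hle : G.dist j l ≤ G.dist j ks := hksmax l hlT
      have hne : G.dist j l ≠ G.dist j ks := fun h => adj_dist_ne htree j hadj h.symm
      have htri : G.dist j ks ≤ G.dist j l + G.dist l ks :=
        hconn.dist_triangle
      have : G.dist l ks = 1 := dist_eq_one_iff_adj.mpr hadj.symm
      omega
  -- ks has a neighbor
  obtain ⟨p, hp⟩ : ∃ p, G.Adj ks p := by
    obtain ⟨W⟩ := hconn.preconnected ks j
    cases W with
    | nil => exact absurd rfl hksj
    | cons h q => exact ⟨_, h⟩
  -- ks is a leaf
  have hisleaf : IsLeaf G ks := by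
    refine ⟨p, hp, fun y hy => ?_⟩
    exact unique_parent htree j hy hp (hnb y hy) (hnb p hp)
  have := hleaf ks hisleaf
  have := (step ks hksj hksM).1
  linarith

lemma solveA (A : Matrix (Fin n) (Fin n) ℚ) (hneg : NegDefQ A) (b : Fin n → ℚ) :
    ∃ w : Fin n → ℚ, ∀ k, ∑ t, A k t * w t = b k := by
  have hinj : Function.Injective A.mulVecLin := by
    rw [injective_iff_map_eq_zero]
    intro v hv
    by_contra hv0
    have hq := qf_neg A hneg v hv0
    have hrow : ∀ i, ∑ j, A i j * v j = 0 := by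
      intro i
      have := congrFun hv i
      simpa [Matrix.mulVec, dotProduct] using this
    rw [qf_rows] at hq
    simp [hrow] at hq
  have hsurj : Function.Surjective A.mulVecLin := by
    rw [← LinearMap.injective_iff_surjective]
    exact hinj
  obtain ⟨w, hw⟩ := hsurj b
  exact ⟨w, fun k => by
    have := congrFun hw k
    simpa [Matrix.mulVecLin, Matrix.mulVec, dotProduct] using this⟩

lemma sol_nonneg (A : Matrix (Fin n) (Fin n) ℚ) (hneg : NegDefQ A)
    (hoff : ∀ i j, i ≠ j → 0 ≤ A i j) (w : Fin n → ℚ)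
    (hw : ∀ k, ∑ t, A k t * w t ≤ 0) : ∀ k, 0 ≤ w k := by
  set m : Fin n → ℚ := fun k => max (-w k) 0 with hm
  set p : Fin n → ℚ := fun k => max (w k) 0 with hp
  have hmnn : ∀ k, 0 ≤ m k := fun k => le_max_right _ _
  have hpnn : ∀ k, 0 ≤ p k := fun k => le_max_right _ _
  have hpm : ∀ k, w k = p k - m k := by
    intro k
    rcases le_total (w k) 0 with h | h
    · simp [hm, hp, max_eq_right h, max_eq_left (neg_nonneg.mpr h)]
    · simp [hm, hp, max_eq_left h, max_eq_right (neg_nonpos.mpr h)]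
  have hmp0 : ∀ k, m k * p k = 0 := by
    intro k
    rcases le_total (w k) 0 with h | h
    · simp [hp, max_eq_right h]
    · simp [hm, max_eq_right (neg_nonpos.mpr h)]
  suffices hm0 : m = 0 by
    intro k
    have := congrFun hm0 k
    simp only [hm, Pi.zero_apply] at this
    by_contra h
    push_neg at h
    rw [max_eq_left (by linarith)] at this
    linarith
  by_contra hm0
  have hq := qf_neg A hneg m hm0
  have h1 : ∑ i, ∑ j, m i * A i j * w j ≤ 0 := by
    rw [qf_rows]
    exact Finset.sum_nonpos fun i _ => mul_nonpos_of_nonneg_of_nonpos (hmnn i) (hw i)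
  have h2 : 0 ≤ ∑ i, ∑ j, m i * A i j * p j := by
    refine Finset.sum_nonneg fun i _ => Finset.sum_nonneg fun j _ => ?_
    rcases eq_or_ne j i with rfl | hne
    · have : m j * A j j * p j = A j j * (m j * p j) := by ring
      rw [this, hmp0, mul_zero]
    · exact mul_nonneg (mul_nonneg (hmnn i) (hoff i j (Ne.symm hne))) (hpnn j)
  have h3 : ∑ i, ∑ j, m i * A i j * w j
      = ∑ i, ∑ j, m i * A i j * p j - ∑ i, ∑ j, m i * A i j * m j := by
    rw [← Finset.sum_sub_distrib]
    refine Finset.sum_congr rfl fun i _ => ?_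
    rw [← Finset.sum_sub_distrib]
    refine Finset.sum_congr rfl fun j _ => ?_
    rw [hpm j]
    ring
  linarith

lemma exists_ratX (A : Matrix (Fin n) (Fin n) ℚ) (hsym : ∀ i j, A i j = A j i)
    (hoff : ∀ i j, i ≠ j → 0 ≤ A i j) (hneg : NegDefQ A)
    (htree : (dualGraph A).IsTree)
    (hC : ∀ i, ∑ t, A i t ≤ 0)
    (hleaf : ∀ i, IsLeaf (dualGraph A) i → ∑ t, A i t < 0)
    (i j : Fin n) (hij : i ≠ j) :
    ∃ X : Fin n → ℚ, (∀ k, 0 < X k) ∧ (∀ k, ∑ t, A k t * X t ≤ -1) ∧ X i < X j := by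
  obtain ⟨w, hw⟩ := solveA A hneg (fun k => if k = j then -1 else 0)
  have hw0 : ∀ k, 0 ≤ w k := by
    refine sol_nonneg A hneg hoff w fun k => ?_
    rw [hw]
    split <;> norm_num
  have hmax := max_at_j A hsym hoff hneg htree hC hleaf j w hw hw0
  obtain ⟨Y, hY⟩ := solveA A hneg (fun _ => -1)
  have hY0 : ∀ k, 0 ≤ Y k := by
    refine sol_nonneg A hneg hoff Y fun k => ?_
    rw [hY]
    norm_num
  have hYpos : ∀ k, 0 < Y k := by
    intro k
    rcases (hY0 k).lt_or_eq with h | h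
    · exact h
    · exfalso
      have h1 : 0 ≤ ∑ t, A k t * Y t := by
        refine Finset.sum_nonneg fun t _ => ?_
        rcases eq_or_ne t k with rfl | hne
        · rw [← h]; ring_nf; simp [← h]
        · exact mul_nonneg (hoff k t (Ne.symm hne)) (hY0 t)
      rw [hY] at h1
      linarith
  -- choose scaling λ
  set s := Finset.univ.erase j with hs
  have hise : i ∈ s := Finset.mem_erase.mpr ⟨hij, Finset.mem_univ i⟩
  have hsne : s.Nonempty := ⟨i, hise⟩
  set δ := s.inf' hsne (fun k => w j - w k) with hδ
  have hδpos : 0 < δ := by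
    rw [hδ]
    rw [Finset.lt_inf'_iff]
    intro k hk
    have := hmax k (Finset.mem_erase.mp hk).1
    linarith
  set lam := (∑ k, Y k) / δ + 1 with hlam
  have hYsum : 0 ≤ ∑ k, Y k := Finset.sum_nonneg fun k _ => hY0 k
  have hlampos : 0 < lam := by positivity
  refine ⟨fun k => Y k + lam * w k, fun k => ?_, fun k => ?_, ?_⟩
  · show 0 < Y k + lam * w k
    have := hw0 k
    have := hYpos k
    nlinarith
  · have hsum : ∑ t, A k t * (Y t + lam * w t)
        = ∑ t, A k t * Y t + lam * ∑ t, A k t * w t := by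
      rw [Finset.mul_sum, ← Finset.sum_add_distrib]
      exact Finset.sum_congr rfl fun t _ => by ring
    rw [hsum, hY, hw]
    split
    · nlinarith
    · simp
  · have hwi : w j - w i ≥ δ := Finset.inf'_le _ hise
    have hYi : Y i ≤ ∑ k, Y k :=
      Finset.single_le_sum (fun k _ => hY0 k) (Finset.mem_univ i)
    have hYj : 0 < Y j := hYpos j
    have heq : lam * δ = (∑ k, Y k) + δ := by
      rw [hlam, add_mul, div_mul_cancel₀ _ (ne_of_gt hδpos), one_mul]
    have hmul : lam * δ ≤ lam * (w j - w i) :=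
      mul_le_mul_of_nonneg_left hwi (le_of_lt hlampos)
    show Y i + lam * w i < Y j + lam * w j
    nlinarith [heq, hmul, hYi, hδpos, hYj]


theorem tree_NN_iff_leaves (n : ℕ) (hn : 2 ≤ n) (A : Matrix (Fin n) (Fin n) ℚ)
    (hsym : ∀ i j, A i j = A j i) (hdiag : ∀ i, A i i < 0)
    (hoff : ∀ i j, i ≠ j → 0 ≤ A i j) (hneg : NegDefQ A)
    (htree : (dualGraph A).IsTree)
    (hC : ∀ i, ∑ j, A i j ≤ 0) :
    (∀ i : Fin n, IsLeaf (dualGraph A) i → ∑ j, A i j < 0) ↔ NashNNAll A := by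
  constructor
  · -- hard direction
    intro hleaf i j hij C hCneg
    obtain ⟨X, hXpos, hXrow, hXij⟩ := exists_ratX A hsym hoff hneg htree hC hleaf i j hij
    -- choose a large natural number N
    set B : ℚ := (∑ k, ∑ t, |A k t|) + (∑ k, (-C k)) with hB
    have hBk : ∀ k, (∑ t, |A k t|) - C k ≤ B := by
      intro k
      have h1 : ∑ t, |A k t| ≤ ∑ k, ∑ t, |A k t| :=
        Finset.single_le_sum (f := fun k => ∑ t, |A k t|)
          (fun k _ => Finset.sum_nonneg fun t _ => abs_nonneg _) (Finset.mem_univ k)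
      have h2 : -C k ≤ ∑ k, (-C k) :=
        Finset.single_le_sum (f := fun k => -C k)
          (fun k _ => neg_nonneg.mpr (hCneg k)) (Finset.mem_univ k)
      rw [hB]
      linarith
    have hB0 : 0 ≤ B := by
      rw [hB]
      have h1 : (0:ℚ) ≤ ∑ k, ∑ t, |A k t| :=
        Finset.sum_nonneg fun k _ => Finset.sum_nonneg fun t _ => abs_nonneg _
      have h2 : (0:ℚ) ≤ ∑ k, (-C k) := Finset.sum_nonneg fun k _ => neg_nonneg.mpr (hCneg k)
      linarith
    obtain ⟨N, hN⟩ := exists_nat_gt (max B (1 / (X j - X i)))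
    have hNB : B < (N : ℚ) := lt_of_le_of_lt (le_max_left _ _) hN
    have hNX : 1 / (X j - X i) < (N : ℚ) := lt_of_le_of_lt (le_max_right _ _) hN
    have hXji : 0 < X j - X i := by linarith
    have hNpos : (0:ℚ) < N := lt_of_le_of_lt hB0 hNB
    have hN1 : 1 < (N:ℚ) * (X j - X i) := by
      rw [div_lt_iff₀ hXji] at hNX
      linarith
    refine ⟨fun k => ⌈(N : ℚ) * X k⌉, fun k => ?_, fun k => ?_, ?_⟩
    · rw [Int.ceil_pos]
      exact mul_pos hNpos (hXpos k)
    · -- main estimate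
      have hterm : ∀ t, A k t * (⌈(N : ℚ) * X t⌉ : ℚ)
          ≤ A k t * ((N:ℚ) * X t) + |A k t| := by
        intro t
        have hc1 : ((N:ℚ) * X t) ≤ (⌈(N : ℚ) * X t⌉ : ℚ) := Int.le_ceil _
        have hc2 : ((⌈(N : ℚ) * X t⌉ : ℚ)) < (N:ℚ) * X t + 1 := Int.ceil_lt_add_one _
        rcases le_total 0 (A k t) with h | h
        · have : A k t * (⌈(N : ℚ) * X t⌉ : ℚ) ≤ A k t * ((N:ℚ) * X t + 1) :=
            mul_le_mul_of_nonneg_left (le_of_lt hc2) h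
          rw [abs_of_nonneg h]
          linarith
        · have : A k t * (⌈(N : ℚ) * X t⌉ : ℚ) ≤ A k t * ((N:ℚ) * X t) :=
            mul_le_mul_of_nonpos_left hc1 h
          have := abs_nonneg (A k t)
          linarith
      have hsum : ∑ t, A k t * (⌈(N : ℚ) * X t⌉ : ℚ)
          ≤ (N:ℚ) * (∑ t, A k t * X t) + ∑ t, |A k t| := by
        calc ∑ t, A k t * (⌈(N : ℚ) * X t⌉ : ℚ)
            ≤ ∑ t, (A k t * ((N:ℚ) * X t) + |A k t|) :=
              Finset.sum_le_sum fun t _ => hterm t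
          _ = (N:ℚ) * (∑ t, A k t * X t) + ∑ t, |A k t| := by
              rw [Finset.sum_add_distrib, Finset.mul_sum]
              congr 1
              exact Finset.sum_congr rfl fun t _ => by ring
      have hrow := hXrow k
      have : (N:ℚ) * (∑ t, A k t * X t) ≤ (N:ℚ) * (-1) :=
        mul_le_mul_of_nonneg_left hrow (le_of_lt hNpos)
      have hfin : (N:ℚ) * (-1) + ∑ t, |A k t| ≤ C k := by
        have := hBk k
        linarith
      calc ∑ t, A k t * ((⌈(N : ℚ) * X t⌉ : ℤ) : ℚ) ≤ (N:ℚ) * (∑ t, A k t * X t) + ∑ t, |A k t| := hsum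
        _ ≤ (N:ℚ) * (-1) + ∑ t, |A k t| := by linarith
        _ ≤ C k := hfin
    · -- ceil comparison
      have h1 : ((⌈(N : ℚ) * X i⌉ : ℚ)) < (N:ℚ) * X i + 1 := Int.ceil_lt_add_one _
      have h2 : ((N:ℚ) * X j) ≤ (⌈(N : ℚ) * X j⌉ : ℚ) := Int.le_ceil _
      have : ((⌈(N : ℚ) * X i⌉ : ℚ)) < ((⌈(N : ℚ) * X j⌉ : ℚ)) := by nlinarith
      exact_mod_cast this
  · -- easy direction
    intro hNN i hileaf
    by_contra hge
    push_neg at hge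
    have hCi : ∑ t, A i t = 0 := le_antisymm (hC i) hge
    obtain ⟨j, hadj, huniq⟩ := hileaf
    obtain ⟨hij, hAij⟩ := (dual_adj A hsym).mp hadj
    have hzero : ∀ t, t ≠ i → t ≠ j → A i t = 0 := by
      intro t hti htj
      by_contra h
      have hpos : 0 < A i t := lt_of_le_of_ne (hoff i t (Ne.symm hti)) (Ne.symm h)
      have : (dualGraph A).Adj i t := (dual_adj A hsym).mpr ⟨Ne.symm hti, hpos⟩
      exact htj (huniq t this)
    have hsplit : ∑ t, A i t = A i i + A i j := by
      rw [← Finset.add_sum_erase Finset.univ (fun t => A i t) (Finset.mem_univ i)]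
      congr 1
      rw [Finset.sum_eq_single_of_mem j
        (Finset.mem_erase.mpr ⟨Ne.symm hij, Finset.mem_univ j⟩)]
      intro t ht htj
      exact hzero t (Finset.mem_erase.mp ht).1 htj
    have hAij' : A i j = -A i i := by rw [hsplit] at hCi; linarith
    obtain ⟨X, hXpos, hXrow, hXij⟩ := hNN i j hij (fun _ => 0) (fun _ => le_refl 0)
    have hrow := hXrow i
    have hsplit2 : ∑ t, A i t * (X t : ℚ) = A i i * (X i : ℚ) + A i j * (X j : ℚ) := by
      rw [← Finset.add_sum_erase Finset.univ (fun t => A i t * (X t : ℚ)) (Finset.mem_univ i)]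
      congr 1
      rw [Finset.sum_eq_single_of_mem j
        (Finset.mem_erase.mpr ⟨Ne.symm hij, Finset.mem_univ j⟩)]
      intro t ht htj
      rw [hzero t (Finset.mem_erase.mp ht).1 htj, zero_mul]
    rw [hsplit2, hAij'] at hrow
    have hXij' : (X i : ℚ) < (X j : ℚ) := by exact_mod_cast hXij
    have hAii := hdiag i
    nlinarith
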